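/- arXiv:2406.02352 — 2 statements merged into one kernel-verified Lean document; each statement's English description precedes it below -/
import Mathlib

section
/- Every feasible schedule is contained in a feasible schedule of length at least ⌈N_max/2⌉: let Δt > 0, t_0 ≤ t_max, N_max = ⌊(t_max − t_0)/Δt⌋ with N_max ≥ 1, and let s ⊆ ℝ be a feasible schedule. Then there exists a feasible schedule t with s ⊆ t and ⌈N_max/2⌉ ≤ |t| ≤ N_max. -/
/-- A finite set `s ⊆ ℝ` is a feasible schedule (w.r.t. start time `t₀`, horizon
`t_max`, and minimum delay `Δt`) if every element `x` of `s` satisfies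
`t₀ + Δt ≤ x ≤ t_max` and any two distinct elements of `s` differ by at least `Δt`. -/
def FeasibleSchedule (t₀ tmax Δt : ℝ) (s : Finset ℝ) : Prop :=
  (∀ x ∈ s, t₀ + Δt ≤ x ∧ x ≤ tmax) ∧
    ∀ x ∈ s, ∀ y ∈ s, x ≠ y → Δt ≤ |x - y|

lemma fs_aux_max (t₀ Δt : ℝ) (hΔt : 0 < Δt) :
    ∀ n : ℕ, ∀ s : Finset ℝ, s.card = n → s.Nonempty →
      (∀ x ∈ s, t₀ + Δt ≤ x) → (∀ x ∈ s, ∀ y ∈ s, x ≠ y → Δt ≤ |x - y|) →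
      ∃ m ∈ s, t₀ + n * Δt ≤ m := by
  intro n
  induction n with
  | zero => intro s hc hne _ _; exact absurd (Finset.card_eq_zero.mp hc) hne.ne_empty
  | succ n ih =>
    intro s hc hne hlb hsep
    set M := s.max' hne with hM
    have hMs : M ∈ s := s.max'_mem hne
    rcases Nat.eq_zero_or_pos n with hn | hn
    · exact ⟨M, hMs, by simpa [hn] using hlb M hMs⟩
    · have hcard' : (s.erase M).card = n := by
        rw [Finset.card_erase_of_mem hMs, hc]; omega
      have hne' : (s.erase M).Nonempty := Finset.card_pos.mp (by omega)
      obtain ⟨m, hm, hle⟩ := ih (s.erase M) hcard' hne'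
        (fun x hx => hlb x (Finset.mem_of_mem_erase hx))
        (fun x hx y hy hxy => hsep x (Finset.mem_of_mem_erase hx) y
          (Finset.mem_of_mem_erase hy) hxy)
      have hmM : m ≤ M := s.le_max' m (Finset.mem_of_mem_erase hm)
      have hne2 : m ≠ M := Finset.ne_of_mem_erase hm
      have := hsep m (Finset.mem_of_mem_erase hm) M hMs hne2
      rw [abs_sub_comm, abs_of_nonneg (by linarith)] at this
      refine ⟨M, hMs, ?_⟩
      push_cast
      linarith

lemma fs_card_le (t₀ tmax Δt : ℝ) (hΔt : 0 < Δt) (h₀ : t₀ ≤ tmax) (s : Finset ℝ)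
    (hs : FeasibleSchedule t₀ tmax Δt s) :
    (s.card : ℤ) ≤ ⌊(tmax - t₀) / Δt⌋ := by
  rcases s.eq_empty_or_nonempty with rfl | hne
  · simp
    exact Int.floor_nonneg.mpr (div_nonneg (by linarith) hΔt.le)
  · obtain ⟨m, hm, hle⟩ := fs_aux_max t₀ Δt hΔt s.card s rfl hne
      (fun x hx => (hs.1 x hx).1) hs.2
    have hmt : m ≤ tmax := (hs.1 m hm).2
    rw [Int.le_floor, le_div_iff₀ hΔt]
    push_cast
    linarith

/-- Any feasible schedule extends to a maximal one. -/
lemma fs_extend (t₀ tmax Δt : ℝ) (hΔt : 0 < Δt) (h₀ : t₀ ≤ tmax) :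
    ∀ fuel : ℕ, ∀ s : Finset ℝ, FeasibleSchedule t₀ tmax Δt s →
      (⌊(tmax - t₀) / Δt⌋.toNat ≤ fuel + s.card) →
      ∃ t : Finset ℝ, FeasibleSchedule t₀ tmax Δt t ∧ s ⊆ t ∧
        ∀ x : ℝ, FeasibleSchedule t₀ tmax Δt (insert x t) → x ∈ t := by
  intro fuel
  induction fuel with
  | zero =>
    intro s hs hfuel
    refine ⟨s, hs, subset_rfl, fun x hx => ?_⟩
    by_contra hxs
    have h1 := fs_card_le t₀ tmax Δt hΔt h₀ (insert x s) hx
    rw [Finset.card_insert_of_notMem hxs] at h1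
    have h2 : (0:ℤ) ≤ ⌊(tmax - t₀) / Δt⌋ :=
      Int.floor_nonneg.mpr (div_nonneg (by linarith) hΔt.le)
    omega
  | succ fuel ih =>
    intro s hs hfuel
    by_cases hmax : ∀ x : ℝ, FeasibleSchedule t₀ tmax Δt (insert x s) → x ∈ s
    · exact ⟨s, hs, subset_rfl, hmax⟩
    · push_neg at hmax
      obtain ⟨x, hx, hxs⟩ := hmax
      obtain ⟨t, ht, hsub, hmax'⟩ := ih (insert x s) hx
        (by rw [Finset.card_insert_of_notMem hxs]; omega)
      exact ⟨t, ht, (Finset.subset_insert x s).trans hsub, hmax'⟩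

/-- **Every feasible schedule is contained in a feasible schedule of length at least
`⌈N_max/2⌉`.** If `Δt > 0`, `t₀ ≤ t_max`, `N_max = ⌊(t_max − t₀)/Δt⌋ ≥ 1` and `s` is
a feasible schedule, then there is a feasible schedule `t ⊇ s` with
`⌈N_max/2⌉ ≤ |t| ≤ N_max`. -/
theorem feasibleSchedule_extend_to_half_Nmax (t₀ tmax Δt : ℝ)
    (hΔt : 0 < Δt) (h₀ : t₀ ≤ tmax)
    (hN : 1 ≤ ⌊(tmax - t₀) / Δt⌋)
    (s : Finset ℝ) (hs : FeasibleSchedule t₀ tmax Δt s) :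
    ∃ t : Finset ℝ, FeasibleSchedule t₀ tmax Δt t ∧ s ⊆ t ∧
      ⌈(⌊(tmax - t₀) / Δt⌋ : ℚ) / 2⌉ ≤ (t.card : ℤ) ∧
      (t.card : ℤ) ≤ ⌊(tmax - t₀) / Δt⌋ := by
  classical
  set N : ℤ := ⌊(tmax - t₀) / Δt⌋ with hNdef
  obtain ⟨t, ht, hsub, hmax⟩ := fs_extend t₀ tmax Δt hΔt h₀ N.toNat s hs (by omega)
  have hcard_le : (t.card : ℤ) ≤ N := fs_card_le t₀ tmax Δt hΔt h₀ t ht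
  -- grid points
  set p : ℤ → ℝ := fun i => t₀ + i * Δt with hp
  have hNle : (N : ℝ) * Δt ≤ tmax - t₀ := by
    have := Int.floor_le ((tmax - t₀) / Δt)
    rw [le_div_iff₀ hΔt] at this
    exact this
  -- every grid point is near some element of t
  have hcover : ∀ i ∈ Finset.Icc (1 : ℤ) N, ∃ y ∈ t, |p i - y| < Δt := by
    intro i hi
    rw [Finset.mem_Icc] at hi
    by_contra hnone
    push_neg at hnone
    have hpi1 : t₀ + Δt ≤ p i := by
      have : (1 : ℝ) * Δt ≤ (i : ℝ) * Δt := by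
        apply mul_le_mul_of_nonneg_right _ hΔt.le
        exact_mod_cast hi.1
      simp only [hp]; linarith
    have hpi2 : p i ≤ tmax := by
      have : (i : ℝ) * Δt ≤ (N : ℝ) * Δt := by
        apply mul_le_mul_of_nonneg_right _ hΔt.le
        exact_mod_cast hi.2
      simp only [hp]; linarith
    have hfeas : FeasibleSchedule t₀ tmax Δt (insert (p i) t) := by
      constructor
      · intro x hx
        rcases Finset.mem_insert.mp hx with rfl | hx
        · exact ⟨hpi1, hpi2⟩
        · exact ht.1 x hx
      · intro x hx y hy hxy
        rcases Finset.mem_insert.mp hx with rfl | hx <;>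
          rcases Finset.mem_insert.mp hy with rfl | hy
        · exact absurd rfl hxy
        · exact hnone y hy
        · rw [abs_sub_comm]; exact hnone x hx
        · exact ht.2 x hx y hy hxy
    have hpit : p i ∈ t := hmax (p i) hfeas
    have := hnone (p i) hpit
    simp at this
    linarith
  -- choice function
  set f : ℤ → ℝ := fun i =>
    if h : ∃ y ∈ t, |p i - y| < Δt then h.choose else 0 with hf
  have hfspec : ∀ i ∈ Finset.Icc (1 : ℤ) N, f i ∈ t ∧ |p i - f i| < Δt := by
    intro i hi
    have h := hcover i hi
    simp only [hf, dif_pos h]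
    exact ⟨h.choose_spec.1, h.choose_spec.2⟩
  -- fibers have at most 2 elements
  have hfiber : ∀ y ∈ t,
      ((Finset.Icc (1 : ℤ) N).filter (fun i => f i = y)).card ≤ 2 := by
    intro y _
    set B := (Finset.Icc (1 : ℤ) N).filter (fun i => f i = y) with hB
    rcases B.eq_empty_or_nonempty with hBe | hBne
    · simp [hBe]
    · set m := B.min' hBne with hm
      have hmB : m ∈ B := B.min'_mem hBne
      have hsub2 : B ⊆ Finset.Icc m (m + 1) := by
        intro j hj
        rw [Finset.mem_Icc]
        have hmj : m ≤ j := B.min'_le j hj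
        refine ⟨hmj, ?_⟩
        rw [hB, Finset.mem_filter] at hj hmB
        have h1 := hfspec j hj.1
        have h2 := hfspec m hmB.1
        rw [hj.2] at h1
        rw [hmB.2] at h2
        have hdist : |p j - p m| < 2 * Δt := by
          calc |p j - p m| = |(p j - y) - (p m - y)| := by ring_nf
            _ ≤ |p j - y| + |p m - y| := abs_sub _ _
            _ < 2 * Δt := by linarith [h1.2, h2.2]
        have hpd : p j - p m = ((j : ℝ) - m) * Δt := by simp only [hp]; ring
        rw [hpd, abs_mul, abs_of_pos hΔt] at hdist
        have : |(j : ℝ) - m| < 2 := by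
          by_contra hcon
          push_neg at hcon
          nlinarith [abs_nonneg ((j:ℝ) - m)]
        have : |((j - m : ℤ) : ℝ)| < 2 := by push_cast; exact this
        rw [← Int.cast_abs] at this
        have h4 : |j - m| < 2 := by exact_mod_cast this
        rw [abs_of_nonneg (by omega)] at h4
        omega
      calc B.card ≤ (Finset.Icc m (m+1)).card := Finset.card_le_card hsub2
        _ = 2 := by rw [Int.card_Icc]; omega
  have hcount : (Finset.Icc (1 : ℤ) N).card ≤ 2 * t.card :=
    Finset.card_le_mul_card_image_of_maps_to
      (fun i hi => (hfspec i hi).1) 2 hfiber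
  have hIcc : ((Finset.Icc (1 : ℤ) N).card : ℤ) = N := by
    rw [Int.card_Icc]; omega
  have hlow : N ≤ 2 * (t.card : ℤ) := by
    have : ((Finset.Icc (1 : ℤ) N).card : ℤ) ≤ 2 * (t.card : ℤ) := by exact_mod_cast hcount
    omega
  refine ⟨t, ht, hsub, ?_, hcard_le⟩
  rw [Int.ceil_le]
  rw [div_le_iff₀ (by norm_num : (0:ℚ) < 2)]
  have : (N : ℤ) ≤ (t.card : ℤ) * 2 := by linarith
  exact_mod_cast this
end

section
/- (Search space reduction, Proposition 1.) Let Δt > 0, t_0 ≤ t_max, N_max = ⌊(t_max − t_0)/Δt⌋ with N_max ≥ 1, and let α : Finset ℝ → ℝ be monotone with respect to set inclusion (s ⊆ t implies α(s) ≤ α(t)). Then the supremum of α over all feasible schedules s with 1 ≤ |s| ≤ N_max equals the supremum of α over all feasible schedules s with ⌈N_max/2⌉ ≤ |s| ≤ N_max; that is, restricting the batch-size search space from {1, ..., N_max} to {⌈N_max/2⌉, ..., N_max} does not change the optimal acquisition value. -/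
/-- Any feasible schedule has at most `⌊(tmax - t₀)/Δt⌋` elements. -/
lemma feasible_card_le (t₀ tmax Δt : ℝ) (hΔt : 0 < Δt)
    (hN0 : 0 ≤ ⌊(tmax - t₀) / Δt⌋) {s : Finset ℝ}
    (hs : FeasibleSchedule t₀ tmax Δt s) :
    (s.card : ℤ) ≤ ⌊(tmax - t₀) / Δt⌋ := by
  set N := ⌊(tmax - t₀) / Δt⌋ with hNdef
  have hmaps : ∀ x ∈ s, ⌊(x - t₀) / Δt⌋ ∈ Finset.Icc (1 : ℤ) N := by
    intro x hx
    obtain ⟨h1, h2⟩ := hs.1 x hx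
    rw [Finset.mem_Icc]
    constructor
    · rw [Int.le_floor]
      push_cast
      rw [le_div_iff₀ hΔt]
      linarith
    · apply Int.floor_le_floor
      gcongr
  have hinj : Set.InjOn (fun x => ⌊(x - t₀) / Δt⌋) s := by
    intro x hx y hy hxy
    by_contra hne
    have hsep := hs.2 x hx y hy hne
    -- wlog x < y
    rcases lt_trichotomy x y with h | h | h
    · have : Δt ≤ y - x := by
        rcases abs_cases (x - y) with ⟨he, _⟩ | ⟨he, _⟩ <;> linarith [hsep, he]
      have key : (x - t₀) / Δt + 1 ≤ (y - t₀) / Δt := by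
        rw [div_add' _ _ _ (ne_of_gt hΔt), div_le_div_iff₀ hΔt hΔt]
        nlinarith
      have : ⌊(x - t₀) / Δt⌋ + 1 ≤ ⌊(y - t₀) / Δt⌋ := by
        have := Int.floor_le_floor key
        rwa [Int.floor_add_one] at this
      simp only at hxy
      omega
    · exact hne h
    · have : Δt ≤ x - y := by
        rcases abs_cases (x - y) with ⟨he, _⟩ | ⟨he, _⟩ <;> linarith [hsep, he]
      have key : (y - t₀) / Δt + 1 ≤ (x - t₀) / Δt := by
        rw [div_add' _ _ _ (ne_of_gt hΔt), div_le_div_iff₀ hΔt hΔt]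
        nlinarith
      have : ⌊(y - t₀) / Δt⌋ + 1 ≤ ⌊(x - t₀) / Δt⌋ := by
        have := Int.floor_le_floor key
        rwa [Int.floor_add_one] at this
      simp only at hxy
      omega
  have hcard : s.card ≤ (Finset.Icc (1 : ℤ) N).card :=
    Finset.card_le_card_of_injOn _ hmaps hinj
  have : (Finset.Icc (1 : ℤ) N).card = N.toNat := by
    rw [Int.card_Icc]
    omega
  rw [this] at hcard
  omega

/-- Key extension lemma: every feasible schedule is contained in a feasible schedule
`t` with `N ≤ 2 * t.card`. -/
lemma feasible_extend (t₀ tmax Δt : ℝ) (hΔt : 0 < Δt)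
    (hN : 1 ≤ ⌊(tmax - t₀) / Δt⌋) {s : Finset ℝ}
    (hs : FeasibleSchedule t₀ tmax Δt s) :
    ∃ t : Finset ℝ, s ⊆ t ∧ FeasibleSchedule t₀ tmax Δt t ∧
      ⌊(tmax - t₀) / Δt⌋ ≤ 2 * (t.card : ℤ) := by
  classical
  set N := ⌊(tmax - t₀) / Δt⌋ with hNdef
  set C : Finset ℤ := Finset.Icc (1 : ℤ) N with hC
  set P : ℤ → Prop := fun i => ∀ x ∈ s, Δt ≤ |t₀ + i * Δt - x| with hP
  set Gidx : Finset ℤ := C.filter (fun i => P i) with hGidx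
  set Bidx : Finset ℤ := C.filter (fun i => ¬ P i) with hBidx
  set G : Finset ℝ := Gidx.image (fun i : ℤ => t₀ + (i : ℝ) * Δt) with hG
  -- grid points are in range
  have hgrid_range : ∀ i ∈ C, t₀ + Δt ≤ t₀ + (i : ℝ) * Δt ∧ t₀ + (i : ℝ) * Δt ≤ tmax := by
    intro i hi
    rw [hC, Finset.mem_Icc] at hi
    constructor
    · nlinarith [(by exact_mod_cast hi.1 : (1 : ℝ) ≤ (i : ℝ))]
    · have h1 : (i : ℝ) ≤ (N : ℝ) := by exact_mod_cast hi.2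
      have h2 : (N : ℝ) ≤ (tmax - t₀) / Δt := Int.floor_le _
      have : (i : ℝ) * Δt ≤ tmax - t₀ := by
        calc (i : ℝ) * Δt ≤ ((tmax - t₀) / Δt) * Δt := by nlinarith
        _ = tmax - t₀ := by field_simp
      linarith
  -- G is disjoint from s
  have hdisj : Disjoint s G := by
    rw [Finset.disjoint_right]
    intro g hg hgs
    rw [hG, Finset.mem_image] at hg
    obtain ⟨i, hi, rfl⟩ := hg
    rw [hGidx, Finset.mem_filter] at hi
    have := hi.2 _ hgs
    simp at this
    linarith
  refine ⟨s ∪ G, Finset.subset_union_left, ?_, ?_⟩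
  · -- feasibility of s ∪ G
    constructor
    · intro x hx
      rcases Finset.mem_union.mp hx with h | h
      · exact hs.1 x h
      · rw [hG, Finset.mem_image] at h
        obtain ⟨i, hi, rfl⟩ := h
        exact hgrid_range i (Finset.mem_filter.mp hi).1
    · intro x hx y hy hxy
      rcases Finset.mem_union.mp hx with h1 | h1 <;> rcases Finset.mem_union.mp hy with h2 | h2
      · exact hs.2 x h1 y h2 hxy
      · rw [hG, Finset.mem_image] at h2
        obtain ⟨i, hi, rfl⟩ := h2
        have := (Finset.mem_filter.mp hi).2 x h1
        rwa [abs_sub_comm] at this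
      · rw [hG, Finset.mem_image] at h1
        obtain ⟨i, hi, rfl⟩ := h1
        exact (Finset.mem_filter.mp hi).2 y h2
      · rw [hG, Finset.mem_image] at h1 h2
        obtain ⟨i, hi, rfl⟩ := h1
        obtain ⟨j, hj, rfl⟩ := h2
        have hij : i ≠ j := by
          intro h; apply hxy; rw [h]
        have heq : (t₀ + (i : ℝ) * Δt) - (t₀ + (j : ℝ) * Δt) = ((i : ℝ) - j) * Δt := by
          ring
        rw [heq, abs_mul, abs_of_pos hΔt]
        have h1 : (1 : ℝ) ≤ |(i : ℝ) - j| := by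
          have h2 : (1 : ℤ) ≤ |i - j| := by
            rcases abs_cases (i - j) with ⟨h, _⟩ | ⟨h, _⟩ <;> omega
          have h3 : ((|i - j| : ℤ) : ℝ) = |(i : ℝ) - j| := by push_cast; ring_nf
          rw [← h3]
          exact_mod_cast h2
        nlinarith
  · -- cardinality bound
    have hcard_union : (s ∪ G).card = s.card + G.card := by
      rw [Finset.card_union_of_disjoint hdisj]
    have hGcard : G.card = Gidx.card := by
      rw [hG]
      apply Finset.card_image_of_injOn
      intro i _ j _ hij
      simp only at hij
      have h1 : (i : ℝ) * Δt = (j : ℝ) * Δt := by linarith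
      have h2 : (i : ℝ) = (j : ℝ) := mul_right_cancel₀ (ne_of_gt hΔt) h1
      exact_mod_cast h2
    -- Bidx has at most 2 * s.card elements
    have hBcard : Bidx.card ≤ 2 * s.card := by
      set f : ℤ → ℝ := fun i =>
        if h : ∃ x ∈ s, |t₀ + i * Δt - x| < Δt then h.choose else 0 with hf
      have hfspec : ∀ i ∈ Bidx, f i ∈ s ∧ |t₀ + i * Δt - f i| < Δt := by
        intro i hi
        rw [hBidx, Finset.mem_filter] at hi
        obtain ⟨hiC, hnP⟩ := hi
        have hnP' : ∃ x ∈ s, |t₀ + (i : ℝ) * Δt - x| < Δt := by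
          by_contra hcon
          push_neg at hcon
          exact hnP (fun x hx => hcon x hx)
        obtain ⟨x, hx1, hx2⟩ := hnP'
        have hex : ∃ x ∈ s, |t₀ + i * Δt - x| < Δt := ⟨x, hx1, hx2⟩
        rw [hf]
        simp only [dif_pos hex]
        exact ⟨hex.choose_spec.1, hex.choose_spec.2⟩
      have himg : Bidx.image f ⊆ s := by
        intro a ha
        rw [Finset.mem_image] at ha
        obtain ⟨i, hi, rfl⟩ := ha
        exact (hfspec i hi).1
      have hfiber : ∀ a ∈ Bidx.image f, (Bidx.filter (fun i => f i = a)).card ≤ 2 := by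
        intro a _
        have hsub : Bidx.filter (fun i => f i = a) ⊆
            Finset.Icc ⌊(a - t₀) / Δt⌋ (⌊(a - t₀) / Δt⌋ + 1) := by
          intro j hj
          rw [Finset.mem_filter] at hj
          obtain ⟨hjB, hja⟩ := hj
          have hspec := hfspec j hjB
          rw [hja] at hspec
          have habs : |t₀ + j * Δt - a| < Δt := hspec.2
          rw [abs_lt] at habs
          have hlow : (a - t₀) / Δt - 1 < (j : ℝ) := by
            rw [div_sub' (ne_of_gt hΔt), div_lt_iff₀ hΔt]
            nlinarith
          have hhigh : (j : ℝ) < (a - t₀) / Δt + 1 := by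
            rw [div_add' _ _ _ (ne_of_gt hΔt), lt_div_iff₀ hΔt]
            nlinarith
          rw [Finset.mem_Icc]
          constructor
          · -- ⌊(a-t₀)/Δt⌋ ≤ j
            have : (⌊(a - t₀) / Δt⌋ : ℝ) ≤ (a - t₀) / Δt := Int.floor_le _
            have : (⌊(a - t₀) / Δt⌋ : ℝ) < (j : ℝ) + 1 := by linarith
            have : ⌊(a - t₀) / Δt⌋ < j + 1 := by exact_mod_cast this
            omega
          · -- j ≤ ⌊(a-t₀)/Δt⌋ + 1
            have h1 : (a - t₀) / Δt < (⌊(a - t₀) / Δt⌋ : ℝ) + 1 := Int.lt_floor_add_one _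
            have : (j : ℝ) < (⌊(a - t₀) / Δt⌋ : ℝ) + 2 := by linarith
            have : (j : ℤ) < ⌊(a - t₀) / Δt⌋ + 2 := by exact_mod_cast this
            omega
        calc (Bidx.filter (fun i => f i = a)).card
            ≤ (Finset.Icc ⌊(a - t₀) / Δt⌋ (⌊(a - t₀) / Δt⌋ + 1)).card :=
              Finset.card_le_card hsub
          _ = 2 := by rw [Int.card_Icc]; omega
      calc Bidx.card ≤ 2 * (Bidx.image f).card :=
            Finset.card_le_mul_card_image Bidx 2 hfiber
        _ ≤ 2 * s.card := by
            have := Finset.card_le_card himg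
            omega
    have hsplit : Gidx.card + Bidx.card = C.card := by
      rw [hGidx, hBidx]
      rw [Finset.card_filter_add_card_filter_not]
    have hCcard : (C.card : ℤ) = N := by
      rw [hC, Int.card_Icc]
      rw [Int.toNat_of_nonneg (by omega)]
      omega
    have : (Gidx.card : ℤ) ≥ N - 2 * s.card := by
      have h1 : (Gidx.card : ℤ) + Bidx.card = N := by
        rw [← hCcard]; exact_mod_cast hsplit
      have h2 : (Bidx.card : ℤ) ≤ 2 * s.card := by exact_mod_cast hBcard
      omega
    rw [hcard_union, hGcard]
    push_cast
    omega

/-- **Search space reduction (Proposition 1).** For a batch acquisition function `α`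
that is monotone with respect to set inclusion, the supremum of `α` over all feasible
schedules of size between `1` and `N_max = ⌊(t_max − t₀)/Δt⌋` equals the supremum of
`α` over all feasible schedules of size between `⌈N_max/2⌉` and `N_max`: restricting
the batch-size search space does not change the optimal acquisition value. -/
theorem searchSpaceReduction (t₀ tmax Δt : ℝ) (hΔt : 0 < Δt) (h₀ : t₀ ≤ tmax)
    (hN : 1 ≤ ⌊(tmax - t₀) / Δt⌋)
    (α : Finset ℝ → ℝ) (hα : ∀ s t : Finset ℝ, s ⊆ t → α s ≤ α t) :
    sSup {v : ℝ | ∃ s : Finset ℝ, FeasibleSchedule t₀ tmax Δt s ∧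
        1 ≤ (s.card : ℤ) ∧ (s.card : ℤ) ≤ ⌊(tmax - t₀) / Δt⌋ ∧ α s = v} =
      sSup {v : ℝ | ∃ s : Finset ℝ, FeasibleSchedule t₀ tmax Δt s ∧
        ⌈(⌊(tmax - t₀) / Δt⌋ : ℚ) / 2⌉ ≤ (s.card : ℤ) ∧
        (s.card : ℤ) ≤ ⌊(tmax - t₀) / Δt⌋ ∧ α s = v} := by
  classical
  set N := ⌊(tmax - t₀) / Δt⌋ with hNdef
  set A := {v : ℝ | ∃ s : Finset ℝ, FeasibleSchedule t₀ tmax Δt s ∧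
      1 ≤ (s.card : ℤ) ∧ (s.card : ℤ) ≤ N ∧ α s = v} with hA
  set B := {v : ℝ | ∃ s : Finset ℝ, FeasibleSchedule t₀ tmax Δt s ∧
      ⌈(N : ℚ) / 2⌉ ≤ (s.card : ℤ) ∧ (s.card : ℤ) ≤ N ∧ α s = v} with hB
  have hceil_pos : 1 ≤ ⌈(N : ℚ) / 2⌉ := by
    rw [Int.le_ceil_iff]
    push_cast
    have : (1 : ℚ) ≤ (N : ℚ) := by exact_mod_cast hN
    linarith
  -- B ⊆ A
  have hBA : B ⊆ A := by
    rintro v ⟨s, hfeas, h1, h2, h3⟩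
    exact ⟨s, hfeas, le_trans hceil_pos h1, h2, h3⟩
  -- upgrade: for every v ∈ A, there is w ∈ B with v ≤ w
  have hup : ∀ v ∈ A, ∃ w ∈ B, v ≤ w := by
    rintro v ⟨s, hfeas, h1, h2, rfl⟩
    obtain ⟨t, hst, htfeas, htcard⟩ := feasible_extend t₀ tmax Δt hΔt hN hfeas
    refine ⟨α t, ⟨t, htfeas, ?_, ?_, rfl⟩, hα s t hst⟩
    · rw [Int.ceil_le]
      push_cast
      rw [div_le_iff₀ (by norm_num : (0:ℚ) < 2)]
      have : (N : ℚ) ≤ 2 * (t.card : ℚ) := by exact_mod_cast htcard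
      linarith
    · exact feasible_card_le t₀ tmax Δt hΔt (by omega) htfeas
  -- A is nonempty
  have hAne : A.Nonempty := by
    refine ⟨α {t₀ + Δt}, {t₀ + Δt}, ?_, ?_, ?_, rfl⟩
    · constructor
      · intro x hx
        rw [Finset.mem_singleton] at hx
        subst hx
        refine ⟨le_refl _, ?_⟩
        have h1 : (1 : ℝ) ≤ (tmax - t₀) / Δt := by
          have h2 := Int.le_floor.mp hN
          exact_mod_cast h2
        rw [le_div_iff₀ hΔt] at h1
        linarith
      · intro x hx y hy hxy
        rw [Finset.mem_singleton] at hx hy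
        exact absurd (hx.trans hy.symm) hxy
    · simp
    · simpa using hN
  have hBne : B.Nonempty := by
    obtain ⟨v, hv⟩ := hAne
    obtain ⟨w, hw, _⟩ := hup v hv
    exact ⟨w, hw⟩
  by_cases hbdd : BddAbove A
  · have hbddB : BddAbove B := hbdd.mono hBA
    apply le_antisymm
    · apply csSup_le hAne
      intro v hv
      obtain ⟨w, hw, hvw⟩ := hup v hv
      exact le_trans hvw (le_csSup hbddB hw)
    · exact csSup_le_csSup hbdd hBne hBA
  · have hbddB : ¬ BddAbove B := by
      intro ⟨M, hM⟩
      apply hbdd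
      refine ⟨M, fun v hv => ?_⟩
      obtain ⟨w, hw, hvw⟩ := hup v hv
      exact le_trans hvw (hM hw)
    rw [Real.sSup_of_not_bddAbove hbdd, Real.sSup_of_not_bddAbove hbddB]
end
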